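/- The set of slowly oscillating operators is a unital norm-closed *-subalgebra of M(A). If in addition for every a ∈ A, R > 0 and ε > 0 there is n₀ such that ‖(1 − f_n) T a‖ ≤ ε and ‖a T (1 − f_n)‖ ≤ ε for all n ≥ n₀ and all T ∈ V_R with ‖T‖ ≤ 1, then the set of slowly oscillating operators contains A. -/

import Mathlib

open Filter

variable {H : Type*} [NormedAddCommGroup H] [InnerProductSpace ℂ H] [CompleteSpace H]

/-- The idealizer (multiplier algebra) of a concrete C*-algebra `A ⊆ B(H)`:
operators `S` with `S·a ∈ A` and `a·S ∈ A` for all `a ∈ A`. -/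
def idealizer (A : NonUnitalStarSubalgebra ℂ (H →L[ℂ] H)) : Set (H →L[ℂ] H) :=
  {S | ∀ a, a ∈ A → S * a ∈ A ∧ a * S ∈ A}

/-- The set of slowly oscillating operators relative to the filtration `V` and the
approximate unit `f`. -/
def slowlyOscSet (A : NonUnitalStarSubalgebra ℂ (H →L[ℂ] H))
    (V : ℝ → Set (H →L[ℂ] H)) (f : ℕ → (H →L[ℂ] H)) : Set (H →L[ℂ] H) :=
  {S | S ∈ idealizer A ∧ ∀ R > (0 : ℝ), ∀ ε > (0 : ℝ), ∃ n₀ : ℕ, ∀ n ≥ n₀,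
    ∀ T ∈ V R, ‖T‖ ≤ 1 →
      ‖(1 - f n) * (T * S - S * T)‖ ≤ ε ∧ ‖(T * S - S * T) * (1 - f n)‖ ≤ ε}

private lemma tendsto_le_of_pos' {g : ℕ → ℝ} (h : Tendsto g atTop (nhds 0)) {δ : ℝ}
    (hδ : 0 < δ) : ∃ n₀, ∀ n ≥ n₀, g n ≤ δ := by
  obtain ⟨n₀, hn⟩ := Filter.eventually_atTop.mp (h.eventually (gt_mem_nhds hδ))
  exact ⟨n₀, fun n hn' => (hn n hn').le⟩

private lemma div_succ_mul_le' {ε c x : ℝ} (hε : 0 ≤ ε) (hx : 0 ≤ x) (hxc : x ≤ c) :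
    ε / (c + 1) * x ≤ ε := by
  have hc1 : (0:ℝ) < c + 1 := by linarith [hx.trans hxc]
  calc ε / (c + 1) * x ≤ ε / (c + 1) * (c + 1) := by
        have := div_nonneg hε hc1.le
        nlinarith
    _ = ε := div_mul_cancel₀ _ hc1.ne'

private lemma comm_norm_le' {T S : H →L[ℂ] H} (hT : ‖T‖ ≤ 1) : ‖T * S - S * T‖ ≤ 2 * ‖S‖ := by
  calc ‖T * S - S * T‖ ≤ ‖T * S‖ + ‖S * T‖ := norm_sub_le _ _
    _ ≤ ‖T‖ * ‖S‖ + ‖S‖ * ‖T‖ := add_le_add (norm_mul_le _ _) (norm_mul_le _ _)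
    _ ≤ 2 * ‖S‖ := by nlinarith [norm_nonneg S, norm_nonneg T]

set_option maxHeartbeats 2000000 in
/-- The set of slowly oscillating operators is a unital norm-closed
*-subalgebra of `M(A)`; if moreover for every `a ∈ A`, `R > 0` and `ε > 0` there is `n₀` with
`‖(1 − f_n) T a‖ ≤ ε` and `‖a T (1 − f_n)‖ ≤ ε` for all `n ≥ n₀` and all `T ∈ V_R` with
`‖T‖ ≤ 1`, then it contains `A`. -/
theorem slowlyOscSet_is_unital_closed_starSubalgebra
    (A : NonUnitalStarSubalgebra ℂ (H →L[ℂ] H)) (hAclosed : IsClosed (A : Set (H →L[ℂ] H)))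
    (V : ℝ → Set (H →L[ℂ] H))
    (hVstar : ∀ r : ℝ, ∀ T ∈ V r, ContinuousLinearMap.adjoint T ∈ V r)
    (f : ℕ → (H →L[ℂ] H))
    (hfA : ∀ n, f n ∈ A) (hfpos : ∀ n, (f n).IsPositive) (hfnorm : ∀ n, ‖f n‖ ≤ 1)
    (happrox : ∀ a ∈ A, Tendsto (fun n => ‖f n * a - a‖) atTop (nhds 0))
    (hquasi : ∀ S ∈ idealizer A, Tendsto (fun n => ‖f n * S - S * f n‖) atTop (nhds 0)) :
    ((1 : H →L[ℂ] H) ∈ slowlyOscSet A V f) ∧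
    (∀ S₁ ∈ slowlyOscSet A V f, ∀ S₂ ∈ slowlyOscSet A V f,
      S₁ + S₂ ∈ slowlyOscSet A V f) ∧
    (∀ c : ℂ, ∀ S ∈ slowlyOscSet A V f, c • S ∈ slowlyOscSet A V f) ∧
    (∀ S₁ ∈ slowlyOscSet A V f, ∀ S₂ ∈ slowlyOscSet A V f,
      S₁ * S₂ ∈ slowlyOscSet A V f) ∧
    (∀ S ∈ slowlyOscSet A V f, ContinuousLinearMap.adjoint S ∈ slowlyOscSet A V f) ∧
    (∀ S ∈ idealizer A, S ∈ closure (slowlyOscSet A V f) → S ∈ slowlyOscSet A V f) ∧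
    ((∀ a ∈ A, ∀ R > (0 : ℝ), ∀ ε > (0 : ℝ), ∃ n₀ : ℕ, ∀ n ≥ n₀, ∀ T ∈ V R, ‖T‖ ≤ 1 →
        ‖(1 - f n) * T * a‖ ≤ ε ∧ ‖a * T * (1 - f n)‖ ≤ ε) →
      ∀ a ∈ A, a ∈ slowlyOscSet A V f) := by
  have hfsa : ∀ n, star (f n) = f n := fun n => (hfpos n).isSelfAdjoint.star_eq
  have hgsa : ∀ n, star ((1 : H →L[ℂ] H) - f n) = 1 - f n := by
    intro n; rw [star_sub, star_one, hfsa]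
  have hgnorm : ∀ n, ‖(1 : H →L[ℂ] H) - f n‖ ≤ 2 := by
    intro n
    calc ‖(1 : H →L[ℂ] H) - f n‖ ≤ ‖(1 : H →L[ℂ] H)‖ + ‖f n‖ := norm_sub_le _ _
      _ ≤ 1 + 1 := add_le_add ContinuousLinearMap.norm_id_le (hfnorm n)
      _ = 2 := by norm_num
  refine ⟨?_, ?_, ?_, ?_, ?_, ?_, ?_⟩
  · -- 1
    refine ⟨fun a ha => ⟨by rw [one_mul]; exact ha, by rw [mul_one]; exact ha⟩,
      fun R hR ε hε => ⟨0, fun n _ T _ _ => ?_⟩⟩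
    simp only [mul_one, one_mul, sub_self, mul_zero, zero_mul, norm_zero]
    exact ⟨hε.le, hε.le⟩
  · -- add
    rintro S₁ ⟨hi₁, ho₁⟩ S₂ ⟨hi₂, ho₂⟩
    refine ⟨fun a ha => ⟨by rw [add_mul]; exact A.add_mem (hi₁ a ha).1 (hi₂ a ha).1,
      by rw [mul_add]; exact A.add_mem (hi₁ a ha).2 (hi₂ a ha).2⟩, fun R hR ε hε => ?_⟩
    obtain ⟨n₁, h₁⟩ := ho₁ R hR (ε/2) (by positivity)
    obtain ⟨n₂, h₂⟩ := ho₂ R hR (ε/2) (by positivity)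
    refine ⟨max n₁ n₂, fun n hn T hT hT1 => ?_⟩
    obtain ⟨l₁, r₁⟩ := h₁ n (le_of_max_le_left hn) T hT hT1
    obtain ⟨l₂, r₂⟩ := h₂ n (le_of_max_le_right hn) T hT hT1
    have key : T * (S₁ + S₂) - (S₁ + S₂) * T = (T * S₁ - S₁ * T) + (T * S₂ - S₂ * T) := by
      noncomm_ring
    rw [key, mul_add, add_mul]
    constructor
    · calc ‖(1 - f n) * (T * S₁ - S₁ * T) + (1 - f n) * (T * S₂ - S₂ * T)‖
          ≤ ‖(1 - f n) * (T * S₁ - S₁ * T)‖ + ‖(1 - f n) * (T * S₂ - S₂ * T)‖ := norm_add_le _ _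
        _ ≤ ε/2 + ε/2 := add_le_add l₁ l₂
        _ = ε := by ring
    · calc ‖(T * S₁ - S₁ * T) * (1 - f n) + (T * S₂ - S₂ * T) * (1 - f n)‖
          ≤ ‖(T * S₁ - S₁ * T) * (1 - f n)‖ + ‖(T * S₂ - S₂ * T) * (1 - f n)‖ := norm_add_le _ _
        _ ≤ ε/2 + ε/2 := add_le_add r₁ r₂
        _ = ε := by ring
  · -- smul
    rintro c S ⟨hi, ho⟩
    refine ⟨fun a ha => ⟨by rw [smul_mul_assoc]; exact SMulMemClass.smul_mem c (hi a ha).1,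
      by rw [mul_smul_comm]; exact SMulMemClass.smul_mem c (hi a ha).2⟩, fun R hR ε hε => ?_⟩
    obtain ⟨n₁, h₁⟩ := ho R hR (ε/(‖c‖+1)) (by positivity)
    refine ⟨n₁, fun n hn T hT hT1 => ?_⟩
    obtain ⟨l₁, r₁⟩ := h₁ n hn T hT hT1
    have key : T * (c • S) - (c • S) * T = c • (T * S - S * T) := by
      rw [mul_smul_comm, smul_mul_assoc, smul_sub]
    rw [key, mul_smul_comm, smul_mul_assoc, norm_smul, norm_smul]
    constructor
    · calc ‖c‖ * ‖(1 - f n) * (T * S - S * T)‖ ≤ ‖c‖ * (ε/(‖c‖+1)) :=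
          mul_le_mul_of_nonneg_left l₁ (norm_nonneg c)
        _ = ε/(‖c‖+1) * ‖c‖ := by ring
        _ ≤ ε := div_succ_mul_le' hε.le (norm_nonneg c) le_rfl
    · calc ‖c‖ * ‖(T * S - S * T) * (1 - f n)‖ ≤ ‖c‖ * (ε/(‖c‖+1)) :=
          mul_le_mul_of_nonneg_left r₁ (norm_nonneg c)
        _ = ε/(‖c‖+1) * ‖c‖ := by ring
        _ ≤ ε := div_succ_mul_le' hε.le (norm_nonneg c) le_rfl
  · -- mul
    rintro S₁ ⟨hi₁, ho₁⟩ S₂ ⟨hi₂, ho₂⟩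
    refine ⟨fun a ha => ⟨by rw [mul_assoc]; exact (hi₁ _ (hi₂ a ha).1).1,
      by rw [← mul_assoc]; exact (hi₂ _ (hi₁ a ha).2).2⟩, fun R hR ε hε => ?_⟩
    have hε3 : (0:ℝ) < ε/3 := by positivity
    obtain ⟨n₁, h₁⟩ := ho₁ R hR (ε/3/(‖S₂‖+1)) (by positivity)
    obtain ⟨n₂, h₂⟩ := ho₂ R hR (ε/3/(‖S₁‖+1)) (by positivity)
    obtain ⟨n₃, h₃⟩ := tendsto_le_of_pos' (hquasi S₁ hi₁)
      (show (0:ℝ) < ε/3/(2*‖S₂‖+1) by positivity)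
    obtain ⟨n₄, h₄⟩ := tendsto_le_of_pos' (hquasi S₂ hi₂)
      (show (0:ℝ) < ε/3/(2*‖S₁‖+1) by positivity)
    refine ⟨max (max n₁ n₂) (max n₃ n₄), fun n hn T hT hT1 => ?_⟩
    have hn₁ := le_of_max_le_left (le_of_max_le_left hn)
    have hn₂ := le_of_max_le_right (le_of_max_le_left hn)
    have hn₃ := le_of_max_le_left (le_of_max_le_right hn)
    have hn₄ := le_of_max_le_right (le_of_max_le_right hn)
    obtain ⟨l₁, r₁⟩ := h₁ n hn₁ T hT hT1
    obtain ⟨l₂, r₂⟩ := h₂ n hn₂ T hT hT1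
    have q₁ : ‖S₁ * f n - f n * S₁‖ ≤ ε/3/(2*‖S₂‖+1) := by
      rw [norm_sub_rev]; exact h₃ n hn₃
    have q₂ : ‖f n * S₂ - S₂ * f n‖ ≤ ε/3/(2*‖S₁‖+1) := h₄ n hn₄
    have c₂ : ‖T * S₂ - S₂ * T‖ ≤ 2*‖S₂‖ := comm_norm_le' hT1
    have c₁ : ‖T * S₁ - S₁ * T‖ ≤ 2*‖S₁‖ := comm_norm_le' hT1
    constructor
    · have key : (1 - f n) * (T * (S₁ * S₂) - S₁ * S₂ * T)
          = (1 - f n) * (T * S₁ - S₁ * T) * S₂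
            + (S₁ * ((1 - f n) * (T * S₂ - S₂ * T))
              + (S₁ * f n - f n * S₁) * (T * S₂ - S₂ * T)) := by noncomm_ring
      rw [key]
      calc ‖(1 - f n) * (T * S₁ - S₁ * T) * S₂
            + (S₁ * ((1 - f n) * (T * S₂ - S₂ * T))
              + (S₁ * f n - f n * S₁) * (T * S₂ - S₂ * T))‖
          ≤ ‖(1 - f n) * (T * S₁ - S₁ * T) * S₂‖
            + (‖S₁ * ((1 - f n) * (T * S₂ - S₂ * T))‖
              + ‖(S₁ * f n - f n * S₁) * (T * S₂ - S₂ * T)‖) :=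
            (norm_add_le _ _).trans (by gcongr; exact norm_add_le _ _)
        _ ≤ ‖(1 - f n) * (T * S₁ - S₁ * T)‖ * ‖S₂‖
            + (‖S₁‖ * ‖(1 - f n) * (T * S₂ - S₂ * T)‖
              + ‖S₁ * f n - f n * S₁‖ * ‖T * S₂ - S₂ * T‖) := by
            gcongr <;> exact norm_mul_le _ _
        _ ≤ ε/3/(‖S₂‖+1) * ‖S₂‖
            + (‖S₁‖ * (ε/3/(‖S₁‖+1)) + ε/3/(2*‖S₂‖+1) * (2*‖S₂‖)) := by
            gcongr <;> first
              | exact norm_nonneg _ | positivity | exact l₁ | exact l₂ | exact q₁ | exact c₂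
        _ ≤ ε/3 + (ε/3 + ε/3) := by
            gcongr <;> first
              | exact div_succ_mul_le' hε3.le (norm_nonneg _) le_rfl
              | exact div_succ_mul_le' hε3.le (by positivity) le_rfl
              | (rw [mul_comm]; exact div_succ_mul_le' hε3.le (norm_nonneg _) le_rfl)
        _ = ε := by ring
    · have key : (T * (S₁ * S₂) - S₁ * S₂ * T) * (1 - f n)
          = (T * S₁ - S₁ * T) * (1 - f n) * S₂
            + ((T * S₁ - S₁ * T) * (f n * S₂ - S₂ * f n)
              + S₁ * ((T * S₂ - S₂ * T) * (1 - f n))) := by noncomm_ring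
      rw [key]
      calc ‖(T * S₁ - S₁ * T) * (1 - f n) * S₂
            + ((T * S₁ - S₁ * T) * (f n * S₂ - S₂ * f n)
              + S₁ * ((T * S₂ - S₂ * T) * (1 - f n)))‖
          ≤ ‖(T * S₁ - S₁ * T) * (1 - f n) * S₂‖
            + (‖(T * S₁ - S₁ * T) * (f n * S₂ - S₂ * f n)‖
              + ‖S₁ * ((T * S₂ - S₂ * T) * (1 - f n))‖) :=
            (norm_add_le _ _).trans (by gcongr; exact norm_add_le _ _)
        _ ≤ ‖(T * S₁ - S₁ * T) * (1 - f n)‖ * ‖S₂‖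
            + (‖T * S₁ - S₁ * T‖ * ‖f n * S₂ - S₂ * f n‖
              + ‖S₁‖ * ‖(T * S₂ - S₂ * T) * (1 - f n)‖) := by
            gcongr <;> exact norm_mul_le _ _
        _ ≤ ε/3/(‖S₂‖+1) * ‖S₂‖
            + (2*‖S₁‖ * (ε/3/(2*‖S₁‖+1)) + ‖S₁‖ * (ε/3/(‖S₁‖+1))) := by
            gcongr <;> first
              | exact norm_nonneg _ | positivity | exact r₁ | exact r₂ | exact q₂ | exact c₁
        _ ≤ ε/3 + (ε/3 + ε/3) := by
            gcongr <;> first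
              | exact div_succ_mul_le' hε3.le (norm_nonneg _) le_rfl
              | (rw [mul_comm]; exact div_succ_mul_le' hε3.le (by positivity) le_rfl)
              | (rw [mul_comm]; exact div_succ_mul_le' hε3.le (norm_nonneg _) le_rfl)
        _ = ε := by ring
  · -- star
    rintro S ⟨hi, ho⟩
    rw [← ContinuousLinearMap.star_eq_adjoint]
    refine ⟨fun a ha => ⟨?_, ?_⟩, fun R hR ε hε => ?_⟩
    · have h : star S * a = star (star a * S) := by rw [star_mul, star_star]
      rw [h]; exact star_mem (hi (star a) (star_mem ha)).2
    · have h : a * star S = star (S * star a) := by rw [star_mul, star_star]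
      rw [h]; exact star_mem (hi (star a) (star_mem ha)).1
    obtain ⟨n₁, h₁⟩ := ho R hR ε hε
    refine ⟨n₁, fun n hn T hT hT1 => ?_⟩
    have hT' : star T ∈ V R := by
      rw [ContinuousLinearMap.star_eq_adjoint]; exact hVstar R T hT
    have hT1' : ‖star T‖ ≤ 1 := by rw [norm_star]; exact hT1
    obtain ⟨l₁, r₁⟩ := h₁ n hn (star T) hT' hT1'
    have keyL : (1 - f n) * (T * star S - star S * T)
        = -star ((star T * S - S * star T) * (1 - f n)) := by
      rw [star_mul, hgsa, star_sub, star_mul, star_mul, star_star]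
      noncomm_ring
    have keyR : (T * star S - star S * T) * (1 - f n)
        = -star ((1 - f n) * (star T * S - S * star T)) := by
      rw [star_mul, hgsa, star_sub, star_mul, star_mul, star_star]
      noncomm_ring
    constructor
    · rw [keyL, norm_neg, norm_star]; exact r₁
    · rw [keyR, norm_neg, norm_star]; exact l₁
  · -- closure
    rintro S hi hS
    refine ⟨hi, fun R hR ε hε => ?_⟩
    obtain ⟨S', hS', hd⟩ := Metric.mem_closure_iff.mp hS (ε/8) (by positivity)
    rw [dist_eq_norm] at hd
    obtain ⟨n₁, h₁⟩ := hS'.2 R hR (ε/2) (by positivity)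
    refine ⟨n₁, fun n hn T hT hT1 => ?_⟩
    obtain ⟨l₁, r₁⟩ := h₁ n hn T hT hT1
    have hcomm : ‖T * (S - S') - (S - S') * T‖ ≤ ε/4 := by
      have := comm_norm_le' (S := S - S') hT1
      linarith
    constructor
    · have key : (1 - f n) * (T * S - S * T)
          = (1 - f n) * (T * S' - S' * T) + (1 - f n) * (T * (S - S') - (S - S') * T) := by
        noncomm_ring
      rw [key]
      calc ‖(1 - f n) * (T * S' - S' * T) + (1 - f n) * (T * (S - S') - (S - S') * T)‖
          ≤ ‖(1 - f n) * (T * S' - S' * T)‖ + ‖1 - f n‖ * ‖T * (S - S') - (S - S') * T‖ :=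
            (norm_add_le _ _).trans (by gcongr; exact norm_mul_le _ _)
        _ ≤ ε/2 + 2 * (ε/4) := add_le_add l₁
            (mul_le_mul (hgnorm n) hcomm (norm_nonneg _) (by norm_num))
        _ = ε := by ring
    · have key : (T * S - S * T) * (1 - f n)
          = (T * S' - S' * T) * (1 - f n) + (T * (S - S') - (S - S') * T) * (1 - f n) := by
        noncomm_ring
      rw [key]
      calc ‖(T * S' - S' * T) * (1 - f n) + (T * (S - S') - (S - S') * T) * (1 - f n)‖
          ≤ ‖(T * S' - S' * T) * (1 - f n)‖ + ‖T * (S - S') - (S - S') * T‖ * ‖1 - f n‖ :=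
            (norm_add_le _ _).trans (by gcongr; exact norm_mul_le _ _)
        _ ≤ ε/2 + (ε/4) * 2 := add_le_add r₁
            (mul_le_mul hcomm (hgnorm n) (norm_nonneg _) (by positivity))
        _ = ε := by ring
  · -- contains A
    intro h a ha
    refine ⟨fun b hb => ⟨A.mul_mem ha hb, A.mul_mem hb ha⟩, fun R hR ε hε => ?_⟩
    obtain ⟨n₁, h₁⟩ := h a ha R hR (ε/2) (by positivity)
    obtain ⟨n₂, h₂⟩ := tendsto_le_of_pos' (happrox a ha) (show (0:ℝ) < ε/2 by positivity)
    obtain ⟨n₃, h₃⟩ := tendsto_le_of_pos' (happrox (star a) (star_mem ha))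
      (show (0:ℝ) < ε/2 by positivity)
    refine ⟨max n₁ (max n₂ n₃), fun n hn T hT hT1 => ?_⟩
    obtain ⟨l₁, r₁⟩ := h₁ n (le_of_max_le_left hn) T hT hT1
    have q₂ := h₂ n (le_of_max_le_left (le_of_max_le_right hn))
    have q₃ := h₃ n (le_of_max_le_right (le_of_max_le_right hn))
    have h1 : ‖(1 - f n) * a‖ ≤ ε/2 := by
      rw [sub_mul, one_mul, norm_sub_rev]; exact q₂
    have h2 : ‖a * (1 - f n)‖ ≤ ε/2 := by
      have h' : a * (1 - f n) = star (star a - f n * star a) := by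
        rw [star_sub, star_mul, star_star, hfsa, mul_sub, mul_one]
      rw [h', norm_star, norm_sub_rev]; exact q₃
    constructor
    · have key : (1 - f n) * (T * a - a * T)
          = (1 - f n) * T * a - ((1 - f n) * a) * T := by noncomm_ring
      rw [key]
      calc ‖(1 - f n) * T * a - ((1 - f n) * a) * T‖
          ≤ ‖(1 - f n) * T * a‖ + ‖((1 - f n) * a) * T‖ := norm_sub_le _ _
        _ ≤ ε/2 + ‖(1 - f n) * a‖ * ‖T‖ := add_le_add l₁ (norm_mul_le _ _)
        _ ≤ ε/2 + (ε/2) * 1 := add_le_add le_rfl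
            (mul_le_mul h1 hT1 (norm_nonneg _) (by positivity))
        _ = ε := by ring
    · have key : (T * a - a * T) * (1 - f n)
          = T * (a * (1 - f n)) - a * T * (1 - f n) := by noncomm_ring
      rw [key]
      calc ‖T * (a * (1 - f n)) - a * T * (1 - f n)‖
          ≤ ‖T * (a * (1 - f n))‖ + ‖a * T * (1 - f n)‖ := norm_sub_le _ _
        _ ≤ ‖T‖ * ‖a * (1 - f n)‖ + ε/2 := add_le_add (norm_mul_le _ _) r₁
        _ ≤ 1 * (ε/2) + ε/2 := add_le_add
            (mul_le_mul hT1 h2 (norm_nonneg _) (by norm_num)) le_rfl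
        _ = ε := by ring
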